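/- Let (X,τ) be a topological space such that the specialization preorder ≤_τ of X is a partial order that is partially well ordered (i.e., well-founded and without infinite antichains), or such that the dual of ≤_τ is a partially well ordered partial order. Then (X,τ) is hereditarily reversible: for every subspace A ⊆ X, every continuous bijection from A to itself is a homeomorphism. -/

import Mathlib

open Function Set

section OrderLemmas

variable {Y : Type*}

/-- Every element of a set is above a minimal element of that set. -/
private lemma exists_min_below (r : Y → Y → Prop)
    (hrefl : ∀ x, r x x) (htrans : ∀ {x y z}, r x y → r y z → r x z)
    (hwf : WellFounded (fun x y => r x y ∧ x ≠ y))
    (T : Set Y) {x : Y} (hx : x ∈ T) :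
    ∃ m, m ∈ T ∧ r m x ∧ ∀ z ∈ T, r z m → z = m := by
  obtain ⟨m, hm, hmin⟩ := hwf.has_min {z | z ∈ T ∧ r z x} ⟨x, hx, hrefl x⟩
  refine ⟨m, hm.1, hm.2, fun z hz hzm => ?_⟩
  by_contra hne
  exact hmin z ⟨hz, htrans hzm hm.2⟩ ⟨hzm, hne⟩

/-- In a well-founded order with no infinite antichains, every sequence has an
increasing pair. -/
private lemma exists_le_pair (r : Y → Y → Prop)
    (hrefl : ∀ x, r x x) (htrans : ∀ {x y z}, r x y → r y z → r x z)
    (hwf : WellFounded (fun x y => r x y ∧ x ≠ y))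
    (hac : ∀ B : Set Y, IsAntichain r B → B.Finite)
    (s : ℕ → Y) : ∃ p k, p < k ∧ r (s p) (s k) := by
  classical
  set T : Set Y := Set.range s with hT
  set M : Set Y := {m | m ∈ T ∧ ∀ z ∈ T, r z m → z = m} with hMdef
  have hmin : ∀ k : ℕ, ∃ m, m ∈ T ∧ r m (s k) ∧ ∀ z ∈ T, r z m → z = m :=
    fun k => exists_min_below r hrefl (fun h h' => htrans h h') hwf T ⟨k, rfl⟩
  choose g hgT hgr hgmin using hmin
  have hMfin : M.Finite := by
    apply hac
    intro a ha b hb hne hr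
    exact hne (hb.2 a ha.1 hr)
  haveI : Finite ↥M := hMfin.to_subtype
  obtain ⟨m, hmfib⟩ := Finite.exists_infinite_fiber
    (fun k : ℕ => (⟨g k, hgT k, hgmin k⟩ : M))
  have h1 : ((fun k : ℕ => (⟨g k, hgT k, hgmin k⟩ : M)) ⁻¹' {m}).Infinite :=
    Set.infinite_coe_iff.mp hmfib
  obtain ⟨p, hp⟩ : (m : Y) ∈ T := m.2.1
  obtain ⟨k, hk, hpk⟩ := h1.exists_gt p
  have hgk : g k = s p := by
    have : (⟨g k, hgT k, hgmin k⟩ : M) = m := hk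
    rw [hp]
    exact congrArg Subtype.val this
  refine ⟨p, k, hpk, ?_⟩
  have := hgr k
  rwa [hgk] at this

variable (f : Y ≃ Y)

private lemma iter_pres (r : Y → Y → Prop)
    (hf : ∀ x y, r x y → r (f x) (f y)) :
    ∀ (n : ℕ) (x y : Y), r x y → r ((⇑f)^[n] x) ((⇑f)^[n] y) := by
  intro n
  induction n with
  | zero => intro x y h; simpa using h
  | succ n ih =>
    intro x y h
    simp only [Function.iterate_succ_apply']
    exact hf _ _ (ih x y h)

private lemma periodic (r : Y → Y → Prop)
    (hrefl : ∀ x, r x x) (htrans : ∀ {x y z}, r x y → r y z → r x z)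
    (hanti : ∀ x y, r x y → r y x → x = y)
    (hwf : WellFounded (fun x y => r x y ∧ x ≠ y))
    (hac : ∀ B : Set Y, IsAntichain r B → B.Finite)
    (hf : ∀ x y, r x y → r (f x) (f y)) (a : Y) :
    ∃ N, 0 < N ∧ (⇑f)^[N] a = a := by
  set s : ℕ → Y := fun n => (⇑f)^[n] a with hs
  have hcomp : ∀ i j : ℕ, (⇑f)^[i] (s j) = s (i + j) :=
    fun i j => (Function.iterate_add_apply _ i j a).symm
  obtain ⟨p, k, hpk, h1⟩ := exists_le_pair r hrefl (fun h h' => htrans h h') hwf hac s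
  obtain ⟨p', k', hpk', h2⟩ := exists_le_pair r hrefl (fun h h' => htrans h h') hwf hac
    (fun n => (⇑f.symm)^[n] a)
  have hli : ∀ n : ℕ, Function.LeftInverse (⇑f)^[n] (⇑f.symm)^[n] :=
    fun n => Function.LeftInverse.iterate f.apply_symm_apply n
  set d := k - p with hd
  set e := k' - p' with he
  have hk' : k = p + d := by omega
  have hd0 : 0 < d := by omega
  have he0 : 0 < e := by omega
  -- turn h2 into `r (s e) (s 0)`
  have h2' : r (s e) (s 0) := by
    have h3 := iter_pres f r hf k' _ _ h2
    rw [hli k' a] at h3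
    have h4 : (⇑f)^[k'] ((⇑f.symm)^[p'] a) = (⇑f)^[e] a := by
      conv_lhs => rw [show k' = e + p' by omega]
      rw [Function.iterate_add_apply, hli p' a]
    rw [h4] at h3
    simpa [hs] using h3
  have hstep1 : ∀ t, r (s (p + t)) (s (k + t)) := by
    intro t
    have h3 := iter_pres f r hf t _ _ h1
    rw [hcomp, hcomp] at h3
    rwa [Nat.add_comm t p, Nat.add_comm t k] at h3
  have hstep2 : ∀ t, r (s (e + t)) (s t) := by
    intro t
    have h3 := iter_pres f r hf t _ _ h2'
    rw [hcomp, hcomp] at h3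
    rwa [Nat.add_comm t e, Nat.add_zero] at h3
  have chain1 : ∀ m : ℕ, r (s p) (s (p + m * d)) := by
    intro m
    induction m with
    | zero => simpa using hrefl (s p)
    | succ m ih =>
      have step := hstep1 (m * d)
      have heq : k + m * d = p + (m + 1) * d := by rw [hk']; ring
      rw [heq] at step
      exact htrans ih step
  have chain2 : ∀ (m t : ℕ), r (s (m * e + t)) (s t) := by
    intro m
    induction m with
    | zero => intro t; simpa using hrefl (s t)
    | succ m ih =>
      intro t
      have step := hstep2 (m * e + t)
      have heq : e + (m * e + t) = (m + 1) * e + t := by ring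
      rw [heq] at step
      exact htrans step (ih t)
  have hA : r (s p) (s (p + e * d)) := chain1 e
  have hB : r (s (d * e + p)) (s p) := chain2 d p
  have hidx : p + e * d = d * e + p := by ring
  rw [hidx] at hA
  have heq : s p = s (d * e + p) := hanti _ _ hA hB
  have heq2 : (⇑f)^[p] a = (⇑f)^[p] ((⇑f)^[d * e] a) := by
    have : s (d * e + p) = (⇑f)^[p] ((⇑f)^[d * e] a) := by
      simp only [hs]
      rw [show d * e + p = p + d * e by ring, Function.iterate_add_apply]
    rw [← this]
    exact heq
  have := (f.injective.iterate p) heq2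
  exact ⟨d * e, Nat.mul_pos hd0 he0, this.symm⟩

/-- Key lemma: the image of an up-set under an order preserving continuous-like
bijection equals a preimage under some iterate. -/
private lemma image_upset (r : Y → Y → Prop)
    (hrefl : ∀ x, r x x) (htrans : ∀ {x y z}, r x y → r y z → r x z)
    (hanti : ∀ x y, r x y → r y x → x = y)
    (hwf : WellFounded (fun x y => r x y ∧ x ≠ y))
    (hac : ∀ B : Set Y, IsAntichain r B → B.Finite)
    (hf : ∀ x y, r x y → r (f x) (f y)) (S : Set Y)
    (hS : ∀ x ∈ S, ∀ y, r x y → y ∈ S) :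
    ∃ n : ℕ, ⇑f '' S = (⇑f)^[n] ⁻¹' S := by
  classical
  have hper := periodic f r hrefl (fun h h' => htrans h h') hanti hwf hac hf
  choose P hP0 hPfix using hper
  have hfixdvd : ∀ (a : Y) (N : ℕ), P a ∣ N → (⇑f)^[N] a = a := by
    rintro a N ⟨c, rfl⟩
    rw [Function.iterate_mul]
    exact Function.IsFixedPt.iterate (hPfix a) c
  have hrefl1 : ∀ x y, r (f x) (f y) → r x y := by
    intro x y h
    have hN : 0 < P x * P y := Nat.mul_pos (hP0 x) (hP0 y)
    have h2 := iter_pres f r hf (P x * P y - 1) _ _ h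
    rw [← Function.iterate_succ_apply, ← Function.iterate_succ_apply,
      Nat.succ_eq_add_one, show P x * P y - 1 + 1 = P x * P y by omega] at h2
    rwa [hfixdvd x _ ⟨P y, rfl⟩, hfixdvd y _ ⟨P x, Nat.mul_comm _ _⟩] at h2
  have hrefln : ∀ (n : ℕ) (x y : Y), r ((⇑f)^[n] x) ((⇑f)^[n] y) → r x y := by
    intro n
    induction n with
    | zero => intro x y h; simpa using h
    | succ n ih =>
      intro x y h
      simp only [Function.iterate_succ_apply] at h
      exact hrefl1 x y (ih _ _ h)
  set M : Set Y := {m | m ∈ S ∧ ∀ z ∈ S, r z m → z = m} with hMdef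
  have hMfin : M.Finite := by
    apply hac
    intro a ha b hb hne hr
    exact hne (hb.2 a ha.1 hr)
  have hbelow : ∀ x ∈ S, ∃ m ∈ M, r m x := by
    intro x hx
    obtain ⟨m, hmS, hmx, hmin⟩ := exists_min_below r hrefl (fun h h' => htrans h h') hwf S hx
    exact ⟨m, ⟨hmS, hmin⟩, hmx⟩
  set N := ∏ m ∈ hMfin.toFinset, P m with hNdef
  have hN0 : 0 < N := Finset.prod_pos (fun m _ => hP0 m)
  have hNfix : ∀ m ∈ M, (⇑f)^[N] m = m := by
    intro m hm
    exact hfixdvd m N (Finset.dvd_prod_of_mem P (hMfin.mem_toFinset.mpr hm))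
  refine ⟨N - 1, ?_⟩
  ext z
  simp only [Set.mem_image, Set.mem_preimage]
  constructor
  · rintro ⟨x, hx, rfl⟩
    rw [← Function.iterate_succ_apply, Nat.succ_eq_add_one, show N - 1 + 1 = N by omega]
    obtain ⟨m, hm, hmx⟩ := hbelow x hx
    have h2 := iter_pres f r hf N _ _ hmx
    rw [hNfix m hm] at h2
    exact hS m hm.1 _ h2
  · intro hz
    refine ⟨f.symm z, ?_, f.apply_symm_apply z⟩
    have hz2 : (⇑f)^[N] (f.symm z) ∈ S := by
      rw [show N = N - 1 + 1 by omega, Function.iterate_succ_apply, f.apply_symm_apply]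
      exact hz
    obtain ⟨m, hm, hmw⟩ := hbelow _ hz2
    have h2 : r ((⇑f)^[N] m) ((⇑f)^[N] (f.symm z)) := by
      rw [hNfix m hm]; exact hmw
    exact hS m hm.1 _ (hrefln N _ _ h2)

end OrderLemmas

/-- A topological space whose specialization preorder `x ≤ y ↔ x ∈ closure {y}` (or its
dual) is a partially well ordered partial order is hereditarily reversible. -/
theorem hereditarily_reversible_of_pwo_specialization {X : Type*} [TopologicalSpace X]
    (hantisymm : ∀ x y : X, x ∈ closure {y} → y ∈ closure {x} → x = y)
    (hpwo :
      (WellFounded (fun x y : X => x ∈ closure {y} ∧ x ≠ y) ∧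
          ∀ A : Set X, IsAntichain (fun x y : X => x ∈ closure {y}) A → A.Finite) ∨
        (WellFounded (fun x y : X => y ∈ closure {x} ∧ x ≠ y) ∧
          ∀ A : Set X, IsAntichain (fun x y : X => x ∈ closure {y}) A → A.Finite)) :
    ∀ A : Set X, ∀ f : A ≃ A, Continuous f → Continuous f.symm := by
  intro A f hcont
  classical
  have hRtrans : ∀ {x y z : X}, x ∈ closure {y} → y ∈ closure {z} → x ∈ closure {z} := by
    intro x y z hxy hyz
    exact closure_minimal (Set.singleton_subset_iff.mpr hyz) isClosed_closure hxy
  set r : ↥A → ↥A → Prop := fun x y => (x : X) ∈ closure {(y : X)} with hrdef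
  have hsub : ∀ x y : ↥A, (x ∈ closure ({y} : Set ↥A)) ↔ r x y := by
    intro x y
    rw [closure_subtype, Set.image_singleton]
  have hrrefl : ∀ x : ↥A, r x x := fun x => subset_closure rfl
  have hrtrans : ∀ {x y z : ↥A}, r x y → r y z → r x z := fun hxy hyz => hRtrans hxy hyz
  have hranti : ∀ x y : ↥A, r x y → r y x → x = y :=
    fun x y h1 h2 => Subtype.ext (hantisymm _ _ h1 h2)
  have hpres : ∀ x y : ↥A, r x y → r (f x) (f y) := by
    intro x y h
    have h1 : x ∈ closure ({y} : Set ↥A) := (hsub x y).mpr h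
    have h3 : f x ∈ closure (⇑f '' {y}) :=
      image_closure_subset_closure_image hcont ⟨x, h1, rfl⟩
    rw [Set.image_singleton] at h3
    exact (hsub _ _).mp h3
  have hopen_up : ∀ (U : Set ↥A), IsOpen U → ∀ x ∈ U, ∀ y, r x y → y ∈ U := by
    intro U hU x hx y hxy
    by_contra hy
    have h1 : closure ({y} : Set ↥A) ⊆ Uᶜ :=
      closure_minimal (Set.singleton_subset_iff.mpr hy) (isClosed_compl_iff.mpr hU)
    exact h1 ((hsub x y).mpr hxy) hx
  have hclosed_up : ∀ (C : Set ↥A), IsClosed C → ∀ x ∈ C, ∀ y, r y x → y ∈ C := by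
    intro C hC x hx y hyx
    have h1 : closure ({x} : Set ↥A) ⊆ C :=
      closure_minimal (Set.singleton_subset_iff.mpr hx) hC
    exact h1 ((hsub y x).mpr hyx)
  have hactrans : (∀ B : Set X, IsAntichain (fun x y : X => x ∈ closure {y}) B → B.Finite) →
      ∀ B : Set ↥A, IsAntichain r B → B.Finite := by
    intro hac B hB
    have h1 : IsAntichain (fun x y : X => x ∈ closure {y}) (Subtype.val '' B) := by
      rintro a ⟨x, hx, rfl⟩ b ⟨y, hy, rfl⟩ hne hr
      exact hB hx hy (fun h => hne (congrArg Subtype.val h)) hr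
    exact Set.Finite.of_finite_image (hac _ h1) Subtype.val_injective.injOn
  rcases hpwo with ⟨hwf, hac⟩ | ⟨hwf, hac⟩
  · -- well-founded case: use open sets
    have hwfr : WellFounded (fun x y : ↥A => r x y ∧ x ≠ y) := by
      have hsubrel : Subrelation (fun x y : ↥A => r x y ∧ x ≠ y)
          (InvImage (fun x y : X => x ∈ closure {y} ∧ x ≠ y) Subtype.val) := by
        rintro x y ⟨h1, h2⟩
        exact ⟨h1, fun h => h2 (Subtype.ext h)⟩
      exact Subrelation.wf hsubrel (InvImage.wf _ hwf)
    rw [continuous_def]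
    intro U hU
    rw [show ⇑f.symm ⁻¹' U = ⇑f '' U from (f.image_eq_preimage_symm U).symm]
    obtain ⟨n, hn⟩ := image_upset f r hrrefl (fun h h' => hrtrans h h') hranti hwfr
      (hactrans hac) hpres U (fun x hx y hxy => hopen_up U hU x hx y hxy)
    rw [hn]
    exact (hcont.iterate n).isOpen_preimage U hU
  · -- dual well-founded case: use closed sets
    set r' : ↥A → ↥A → Prop := fun x y => r y x with hr'def
    have hwfr : WellFounded (fun x y : ↥A => r' x y ∧ x ≠ y) := by
      have hsubrel : Subrelation (fun x y : ↥A => r' x y ∧ x ≠ y)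
          (InvImage (fun x y : X => y ∈ closure {x} ∧ x ≠ y) Subtype.val) := by
        rintro x y ⟨h1, h2⟩
        exact ⟨h1, fun h => h2 (Subtype.ext h)⟩
      exact Subrelation.wf hsubrel (InvImage.wf _ hwf)
    have hac' : ∀ B : Set ↥A, IsAntichain r' B → B.Finite := by
      intro B hB
      apply hactrans hac
      intro a ha b hb hne hr
      exact hB hb ha hne.symm hr
    rw [continuous_iff_isClosed]
    intro C hC
    rw [show ⇑f.symm ⁻¹' C = ⇑f '' C from (f.image_eq_preimage_symm C).symm]
    obtain ⟨n, hn⟩ := image_upset f r' (fun x => hrrefl x)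
      (fun h h' => hrtrans h' h) (fun x y h1 h2 => hranti x y h2 h1) hwfr
      hac' (fun x y h => hpres y x h) C (fun x hx y hxy => hclosed_up C hC x hx y hxy)
    rw [hn]
    exact hC.preimage (hcont.iterate n)
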